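/- (Corollary 2) Let c ≥ 0 and λ ∈ ℝ, and define the real sequence (u_k)_{k≥0} by u_0 = 1 and, for k ≥ 0, u_{k+1} = ( (λ + c² + k(k+1)) u_k − 2c²k u_{k−1} + c²k(k−1) u_{k−2} ) / (2(k+1)), with u_j = 0 for j < 0. Define W : (−3, 1) → ℝ by W(y) = Σ_{k≥0} (y+1)^k u_k / k!. Then this series converges for every y ∈ (−3, 1), W is twice differentiable on (−3, 1), W(−1) = 1, and W satisfies the confluent Heun equation (1−y²) W''(y) − 2y W'(y) − c² y² W(y) − λ W(y) = 0 for all y ∈ (−3, 1). -/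

import Mathlib

open Set Finset

/-- shift a coefficient sequence -/
def sh6 (b : ℕ → ℝ) : ℕ → ℝ
  | 0 => 0
  | (m+1) => b m

@[simp] lemma sh6_zero (b : ℕ → ℝ) : sh6 b 0 = 0 := rfl
@[simp] lemma sh6_succ (b : ℕ → ℝ) (m : ℕ) : sh6 b (m+1) = b m := rfl

lemma sh6_hasSum {b : ℕ → ℝ} {x S : ℝ}
    (h : HasSum (fun n => b n * x ^ n) S) :
    HasSum (fun n => sh6 b n * x ^ n) (x * S) := by
  have h1 : HasSum (fun n => sh6 b (n + 1) * x ^ (n + 1)) (x * S) := by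
    have := h.mul_left x
    simpa [pow_succ, mul_comm, mul_assoc, mul_left_comm] using this
  have h2 := (hasSum_nat_add_iff (f := fun n => sh6 b n * x ^ n) 1).mp h1
  simpa using h2

set_option maxHeartbeats 1000000 in
lemma growth6 (c l : ℝ) (a : ℕ → ℝ)
    (hrec : ∀ m : ℕ, 2 * ((m:ℝ)+3)^2 * a (m+3)
      = (((m:ℝ)+2)*((m:ℝ)+3)+c^2+l)*a (m+2) - 2*c^2*a (m+1) + c^2*a m)
    (ρ : ℝ) (hρ : 1/2 < ρ) :
    ∃ C : ℝ, 0 ≤ C ∧ ∀ n, |a n| ≤ C * ρ ^ n := by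
  have hρ0 : 0 < ρ := by linarith
  set D : ℝ := (c^2 + |l|)*ρ^2 + 2*c^2*ρ + c^2 with hD
  have hD0 : 0 ≤ D := by positivity
  set B : ℝ := ρ^2 * (2*ρ - 1) with hB
  have hB0 : 0 < B := by
    have : 0 < 2*ρ - 1 := by linarith
    positivity
  obtain ⟨N, hN⟩ := exists_nat_gt (D / B)
  set C : ℝ := ∑ n ∈ range (N+3), |a n| / ρ ^ n with hC
  have hC0 : 0 ≤ C := Finset.sum_nonneg fun n _ => div_nonneg (abs_nonneg _) (by positivity)
  refine ⟨C, hC0, ?_⟩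
  intro n
  induction n using Nat.strong_induction_on with
  | _ n ih =>
    by_cases hn : n < N + 3
    · have hmem : n ∈ range (N+3) := Finset.mem_range.mpr hn
      have h1 : |a n| / ρ ^ n ≤ C :=
        Finset.single_le_sum (f := fun k => |a k| / ρ ^ k)
          (fun k _ => div_nonneg (abs_nonneg _) (by positivity)) hmem
      calc |a n| = (|a n| / ρ ^ n) * ρ ^ n := by field_simp
        _ ≤ C * ρ ^ n := mul_le_mul_of_nonneg_right h1 (by positivity)
    · push_neg at hn
      obtain ⟨m, rfl⟩ : ∃ m, n = m + 3 := ⟨n - 3, by omega⟩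
      have hmN : (N : ℝ) ≤ (m : ℝ) := by exact_mod_cast Nat.cast_le.mpr (by omega)
      have h2 := ih (m+2) (by omega)
      have h1 := ih (m+1) (by omega)
      have h0 := ih m (by omega)
      set t : ℝ := (m : ℝ) with ht
      have ht0 : 0 ≤ t := Nat.cast_nonneg m
      have e1 : ρ ^ (m+1) = ρ ^ m * ρ := pow_succ ρ m
      have e2 : ρ ^ (m+2) = ρ ^ m * ρ^2 := by ring
      have e3 : ρ ^ (m+3) = ρ ^ m * ρ^3 := by ring
      have hρm : (0:ℝ) < ρ ^ m := by positivity
      -- D < (t+3)^2 * B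
      have hDb : D < (t+3)^2 * B := by
        have hDN : D < (N:ℝ) * B := by
          have := (div_lt_iff₀ hB0).mp hN
          linarith
        have hle : (N:ℝ) ≤ (t+3)^2 := by nlinarith
        have : (N:ℝ) * B ≤ (t+3)^2 * B := mul_le_mul_of_nonneg_right hle hB0.le
        linarith
      -- |a (m+3)| * (2*(t+3)^2) ≤ ...
      have h32 : (0:ℝ) < 2 * (t+3)^2 := by positivity
      have habs : |a (m+3)| * (2 * (t+3)^2)
          ≤ ((t+2)*(t+3) + c^2 + |l|) * |a (m+2)| + 2*c^2 * |a (m+1)| + c^2 * |a m| := by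
        have hv : |a (m+3)| * (2 * (t+3)^2)
            = |((t+2)*(t+3)+c^2+l)*a (m+2) - 2*c^2*a (m+1) + c^2*a m| := by
          rw [← hrec m, abs_mul, abs_of_pos h32, mul_comm]
        rw [hv]
        have b1 : |((t+2)*(t+3)+c^2+l)*a (m+2) - 2*c^2*a (m+1) + c^2*a m|
            ≤ |((t+2)*(t+3)+c^2+l)*a (m+2)| + |2*c^2*a (m+1)| + |c^2*a m| :=
          le_trans (abs_add_le _ _) (by
            have := abs_sub (((t+2)*(t+3)+c^2+l)*a (m+2)) (2*c^2*a (m+1))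
            linarith)
        have c1 : |((t+2)*(t+3)+c^2+l)*a (m+2)| ≤ ((t+2)*(t+3)+c^2+|l|) * |a (m+2)| := by
          rw [abs_mul]
          refine mul_le_mul_of_nonneg_right ?_ (abs_nonneg _)
          calc |(t+2)*(t+3)+c^2+l| ≤ |(t+2)*(t+3)+c^2| + |l| := abs_add_le _ _
            _ ≤ (t+2)*(t+3)+c^2 + |l| := by
                have hnn : (0:ℝ) ≤ (t+2)*(t+3)+c^2 := by nlinarith [sq_nonneg c]
                rw [abs_of_nonneg hnn]
        have c2 : |2*c^2*a (m+1)| = 2*c^2 * |a (m+1)| := by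
          rw [abs_mul, abs_of_nonneg (by positivity : (0:ℝ) ≤ 2*c^2)]
        have c3 : |c^2*a m| = c^2 * |a m| := by
          rw [abs_mul, abs_of_nonneg (sq_nonneg c)]
        linarith
      -- combine
      have l2 : ((t+2)*(t+3) + c^2 + |l|) * |a (m+2)|
          ≤ ((t+2)*(t+3) + c^2 + |l|) * (C * ρ^m * ρ^2) := by
        refine mul_le_mul_of_nonneg_left ?_ (by nlinarith [abs_nonneg l, sq_nonneg c])
        calc |a (m+2)| ≤ C * ρ^(m+2) := h2
          _ = C * ρ^m * ρ^2 := by rw [e2]; ring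
      have l1 : 2*c^2 * |a (m+1)| ≤ 2*c^2 * (C * ρ^m * ρ) := by
        refine mul_le_mul_of_nonneg_left ?_ (by positivity)
        calc |a (m+1)| ≤ C * ρ^(m+1) := h1
          _ = C * ρ^m * ρ := by rw [e1]; ring
      have l0 : c^2 * |a m| ≤ c^2 * (C * ρ^m) := by
        exact mul_le_mul_of_nonneg_left h0 (sq_nonneg c)
      have expand : ((t+2)*(t+3) + c^2 + |l|) * (C * ρ^m * ρ^2)
            + 2*c^2 * (C * ρ^m * ρ) + c^2 * (C * ρ^m)
          = C * ρ^m * ((t+2)*(t+3)*ρ^2 + D) := by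
        simp only [hD]; ring
      have final : (t+2)*(t+3)*ρ^2 + D ≤ 2*(t+3)^2*ρ^3 := by
        have m1 : (t+2)*(t+3)*ρ^2 ≤ (t+3)^2*ρ^2 := by nlinarith [sq_nonneg ρ]
        have e4 : (t+3)^2*ρ^2 + (t+3)^2*B = 2*(t+3)^2*ρ^3 := by
          simp only [hB]; ring
        linarith
      have chain : |a (m+3)| * (2*(t+3)^2) ≤ C * ρ^m * (2*(t+3)^2*ρ^3) := by
        calc |a (m+3)| * (2*(t+3)^2)
            ≤ ((t+2)*(t+3) + c^2 + |l|) * |a (m+2)| + 2*c^2 * |a (m+1)| + c^2 * |a m| := habs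
          _ ≤ C * ρ^m * ((t+2)*(t+3)*ρ^2 + D) := by linarith
          _ ≤ C * ρ^m * (2*(t+3)^2*ρ^3) := by
              exact mul_le_mul_of_nonneg_left final (by positivity)
      rw [e3]
      have hfin : |a (m+3)| * (2*(t+3)^2) ≤ (C * (ρ^m * ρ^3)) * (2*(t+3)^2) := by
        refine le_trans chain (le_of_eq ?_)
        ring
      exact le_of_mul_le_mul_right hfin h32

lemma heun_coeff_rec (c l : ℝ) (u : ℕ → ℝ)
    (hurec : ∀ k : ℕ,
      u (k + 1) =
        ((l + c ^ 2 + (k : ℝ) * ((k : ℝ) + 1)) * u k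
          - 2 * c ^ 2 * (k : ℝ) * u (k - 1)
          + c ^ 2 * (k : ℝ) * ((k : ℝ) - 1) * u (k - 2)) / (2 * ((k : ℝ) + 1))) :
    ∀ m : ℕ, 2 * ((m:ℝ)+3)^2 * (u (m+3) / ((m+3).factorial : ℝ))
      = (((m:ℝ)+2)*((m:ℝ)+3)+c^2+l) * (u (m+2) / ((m+2).factorial : ℝ))
        - 2*c^2*(u (m+1) / ((m+1).factorial : ℝ)) + c^2*(u m / (m.factorial : ℝ)) := by
  intro m
  have h := hurec (m+2)
  have e1 : m + 2 - 1 = m + 1 := by omega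
  have e2 : m + 2 - 2 = m := by omega
  rw [e1, e2] at h
  have hfm : ((m.factorial : ℝ)) ≠ 0 := Nat.cast_ne_zero.mpr m.factorial_pos.ne'
  have hf1 : (((m+1).factorial : ℝ)) ≠ 0 := Nat.cast_ne_zero.mpr (m+1).factorial_pos.ne'
  have hf2 : (((m+2).factorial : ℝ)) ≠ 0 := Nat.cast_ne_zero.mpr (m+2).factorial_pos.ne'
  have hf3 : (((m+3).factorial : ℝ)) ≠ 0 := Nat.cast_ne_zero.mpr (m+3).factorial_pos.ne'
  have F3 : (((m+3).factorial : ℝ)) = ((m:ℝ)+3) * ((m+2).factorial : ℝ) := by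
    rw [show m+3 = (m+2)+1 from rfl, Nat.factorial_succ]
    push_cast; ring
  have F2 : (((m+2).factorial : ℝ)) = ((m:ℝ)+2) * ((m+1).factorial : ℝ) := by
    rw [show m+2 = (m+1)+1 from rfl, Nat.factorial_succ]
    push_cast; ring
  have F1 : (((m+1).factorial : ℝ)) = ((m:ℝ)+1) * (m.factorial : ℝ) := by
    rw [Nat.factorial_succ]; push_cast; ring
  have hm3 : ((m:ℝ)+3) ≠ 0 := by positivity
  have hm2 : ((m:ℝ)+2) ≠ 0 := by positivity
  have hm1 : ((m:ℝ)+1) ≠ 0 := by positivity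
  rw [show m + 3 = (m+2) + 1 from rfl, h]
  push_cast
  rw [F3, F2, F1]
  field_simp
  ring

lemma summable6 {a : ℕ → ℝ} {C ρ r : ℝ} (hC : 0 ≤ C)
    (hb : ∀ n, |a n| ≤ C * ρ ^ n) (hρ0 : 0 < ρ) (hr : 0 ≤ r) (hq : ρ * r < 1) :
    Summable (fun n : ℕ => ((n:ℝ)+2)^2 * |a n| * r ^ n) := by
  set q := ρ * r with hqdef
  have hq0 : 0 ≤ q := mul_nonneg hρ0.le hr
  have hqn : ‖q‖ < 1 := by rw [Real.norm_eq_abs, abs_of_nonneg hq0]; exact hq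
  have s0 : Summable (fun n : ℕ => q ^ n) := summable_geometric_of_lt_one hq0 hq
  have s1 : Summable (fun n : ℕ => (n:ℝ) ^ 1 * q ^ n) :=
    summable_pow_mul_geometric_of_norm_lt_one 1 hqn
  have s2 : Summable (fun n : ℕ => (n:ℝ) ^ 2 * q ^ n) :=
    summable_pow_mul_geometric_of_norm_lt_one 2 hqn
  have sg : Summable (fun n : ℕ => C * (((n:ℝ)+2)^2 * q ^ n)) := by
    have h := (((s2.add ((s1.mul_left 4)))).add (s0.mul_left 4)).mul_left C
    refine h.congr fun n => ?_
    ring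
  refine Summable.of_nonneg_of_le (fun n => by positivity) (fun n => ?_) sg
  have h1 : |a n| * r ^ n ≤ (C * ρ ^ n) * r ^ n :=
    mul_le_mul_of_nonneg_right (hb n) (by positivity)
  calc ((n:ℝ)+2)^2 * |a n| * r ^ n = ((n:ℝ)+2)^2 * (|a n| * r ^ n) := by ring
    _ ≤ ((n:ℝ)+2)^2 * ((C * ρ ^ n) * r ^ n) := by
        exact mul_le_mul_of_nonneg_left h1 (by positivity)
    _ = C * (((n:ℝ)+2)^2 * q ^ n) := by rw [hqdef, mul_pow]; ring

lemma g0_hasDerivAt (u : ℕ → ℝ) (n : ℕ) (y : ℝ) :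
    HasDerivAt (fun z : ℝ => (z+1)^n * u n / (n.factorial : ℝ))
      ((n:ℝ) * (y+1)^(n-1) * (u n / (n.factorial : ℝ))) y := by
  have h := (((hasDerivAt_id y).add_const (1:ℝ)).pow n).mul_const (u n / (n.factorial : ℝ))
  have hfun : (fun z : ℝ => (z+1)^n * u n / (n.factorial : ℝ))
      = fun z : ℝ => (z+1)^n * (u n / (n.factorial : ℝ)) := by
    funext z; rw [mul_div_assoc]
  rw [hfun]
  simpa using h

lemma g1_hasDerivAt (u : ℕ → ℝ) (n : ℕ) (y : ℝ) :
    HasDerivAt (fun z : ℝ => (n:ℝ) * (z+1)^(n-1) * (u n / (n.factorial : ℝ)))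
      ((n:ℝ) * ((n:ℝ)-1) * (y+1)^(n-2) * (u n / (n.factorial : ℝ))) y := by
  match n with
  | 0 =>
    simp only [Nat.cast_zero, zero_mul]
    exact hasDerivAt_const y 0
  | (m+1) =>
    have h := ((((hasDerivAt_id y).add_const (1:ℝ)).pow m).mul_const
      (u (m+1) / ((m+1).factorial : ℝ))).const_mul ((m+1 : ℕ) : ℝ)
    have hfun : (fun z : ℝ => ((m+1:ℕ):ℝ) * (z+1)^(m+1-1) * (u (m+1) / ((m+1).factorial : ℝ)))
        = fun z : ℝ => ((m+1:ℕ):ℝ) * ((z+1)^m * (u (m+1) / ((m+1).factorial : ℝ))) := by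
      funext z; rw [Nat.add_sub_cancel]; ring
    rw [hfun]
    refine h.congr_deriv ?_
    rcases m with _ | k
    · norm_num
    · rw [show k+1+1-2 = k from by omega, show k+1-1 = k from by omega]
      push_cast; simp only [id_eq]; ring

lemma g1_bound (u : ℕ → ℝ) (n : ℕ) {y r : ℝ} (hr : 1 ≤ r) (hy : |y+1| ≤ r) :
    |(n:ℝ) * (y+1)^(n-1) * (u n / (n.factorial : ℝ))|
      ≤ ((n:ℝ)+2)^2 * |u n / (n.factorial : ℝ)| * r ^ n := by
  have hr0 : (0:ℝ) ≤ r := by linarith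
  have h1 : |(y+1)^(n-1)| ≤ r ^ (n-1) := by
    rw [abs_pow]; exact pow_le_pow_left₀ (abs_nonneg _) hy _
  have h2 : r ^ (n-1) ≤ r ^ n := pow_le_pow_right₀ hr (Nat.sub_le n 1)
  calc |(n:ℝ) * (y+1)^(n-1) * (u n / (n.factorial : ℝ))|
      = (n:ℝ) * |(y+1)^(n-1)| * |u n / (n.factorial : ℝ)| := by
        rw [abs_mul, abs_mul, Nat.abs_cast]
    _ ≤ (n:ℝ) * r ^ n * |u n / (n.factorial : ℝ)| := by
        have := le_trans h1 h2
        apply mul_le_mul_of_nonneg_right _ (abs_nonneg _)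
        exact mul_le_mul_of_nonneg_left this (Nat.cast_nonneg n)
    _ ≤ ((n:ℝ)+2)^2 * r ^ n * |u n / (n.factorial : ℝ)| := by
        apply mul_le_mul_of_nonneg_right _ (abs_nonneg _)
        apply mul_le_mul_of_nonneg_right _ (by positivity)
        nlinarith [Nat.cast_nonneg (α := ℝ) n]
    _ = ((n:ℝ)+2)^2 * |u n / (n.factorial : ℝ)| * r ^ n := by ring

lemma g2_bound (u : ℕ → ℝ) (n : ℕ) {y r : ℝ} (hr : 1 ≤ r) (hy : |y+1| ≤ r) :
    |(n:ℝ) * ((n:ℝ)-1) * (y+1)^(n-2) * (u n / (n.factorial : ℝ))|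
      ≤ ((n:ℝ)+2)^2 * |u n / (n.factorial : ℝ)| * r ^ n := by
  have hr0 : (0:ℝ) ≤ r := by linarith
  have h1 : |(y+1)^(n-2)| ≤ r ^ (n-2) := by
    rw [abs_pow]; exact pow_le_pow_left₀ (abs_nonneg _) hy _
  have h2 : r ^ (n-2) ≤ r ^ n := pow_le_pow_right₀ hr (Nat.sub_le n 2)
  have hn0 : (0:ℝ) ≤ (n:ℝ) := Nat.cast_nonneg n
  have h3 : |(n:ℝ) * ((n:ℝ)-1)| ≤ ((n:ℝ)+2)^2 := by
    rw [abs_mul, Nat.abs_cast]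
    rcases le_or_gt 1 (n:ℝ) with h | h
    · rw [abs_of_nonneg (by linarith)]; nlinarith
    · rw [abs_of_nonpos (by linarith)]; nlinarith
  calc |(n:ℝ) * ((n:ℝ)-1) * (y+1)^(n-2) * (u n / (n.factorial : ℝ))|
      = |(n:ℝ) * ((n:ℝ)-1)| * |(y+1)^(n-2)| * |u n / (n.factorial : ℝ)| := by
        rw [abs_mul, abs_mul]
    _ ≤ ((n:ℝ)+2)^2 * r ^ n * |u n / (n.factorial : ℝ)| := by
        apply mul_le_mul_of_nonneg_right _ (abs_nonneg _)
        exact mul_le_mul h3 (le_trans h1 h2) (abs_nonneg _) (by positivity)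
    _ = ((n:ℝ)+2)^2 * |u n / (n.factorial : ℝ)| * r ^ n := by ring
noncomputable def cf0 (u : ℕ → ℝ) (n : ℕ) : ℝ := u n / (n.factorial : ℝ)
noncomputable def cf1 (u : ℕ → ℝ) (n : ℕ) : ℝ := ((n:ℝ)+1) * (u (n+1) / ((n+1).factorial : ℝ))
noncomputable def cf2 (u : ℕ → ℝ) (n : ℕ) : ℝ := ((n:ℝ)+2)*((n:ℝ)+1) * (u (n+2) / ((n+2).factorial : ℝ))

theorem stmt6 (c l : ℝ) (hc : 0 ≤ c)
    (u : ℕ → ℝ) (hu0 : u 0 = 1)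
    (hurec : ∀ k : ℕ,
      u (k + 1) =
        ((l + c ^ 2 + (k : ℝ) * ((k : ℝ) + 1)) * u k
          - 2 * c ^ 2 * (k : ℝ) * u (k - 1)
          + c ^ 2 * (k : ℝ) * ((k : ℝ) - 1) * u (k - 2)) / (2 * ((k : ℝ) + 1)))
    (W : ℝ → ℝ)
    (hW : ∀ y : ℝ, W y = ∑' k : ℕ, (y + 1) ^ k * u k / (k.factorial : ℝ)) :
    (∀ y ∈ Ioo (-3 : ℝ) 1,
        Summable (fun k : ℕ => (y + 1) ^ k * u k / (k.factorial : ℝ))) ∧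
    W (-1) = 1 ∧
    (∀ y ∈ Ioo (-3 : ℝ) 1,
        DifferentiableAt ℝ W y ∧ DifferentiableAt ℝ (deriv W) y ∧
        (1 - y ^ 2) * deriv (deriv W) y - 2 * y * deriv W y
          - c ^ 2 * y ^ 2 * W y - l * W y = 0) := by
  have harec := heun_coeff_rec c l u hurec
  -- summability of the master bound for every radius r < 2
  have hsum : ∀ r : ℝ, 0 ≤ r → r < 2 →
      Summable (fun n : ℕ => ((n:ℝ)+2)^2 * |u n / (n.factorial : ℝ)| * r ^ n) := by
    intro r hr0 hr2
    have hρden : (0:ℝ) < r + 2 := by linarith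
    have hρ : 1/2 < 2 / (r + 2) := by
      rw [lt_div_iff₀ hρden]; linarith
    obtain ⟨C, hC0, hCb⟩ := growth6 c l (fun n => u n / (n.factorial : ℝ)) harec _ hρ
    have hq : 2 / (r + 2) * r < 1 := by
      rw [div_mul_eq_mul_div, div_lt_one hρden]; linarith
    exact summable6 hC0 hCb (by linarith) hr0 hq
  -- Part 1
  have part1 : ∀ y ∈ Ioo (-3 : ℝ) 1,
      Summable (fun k : ℕ => (y + 1) ^ k * u k / (k.factorial : ℝ)) := by
    intro y hy
    obtain ⟨hy1, hy2⟩ := hy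
    have hx : |y + 1| < 2 := abs_lt.mpr ⟨by linarith, by linarith⟩
    refine Summable.of_norm_bounded (hsum |y+1| (abs_nonneg _) hx) fun n => ?_
    rw [Real.norm_eq_abs, mul_div_assoc, abs_mul, abs_pow]
    have h1 : |y+1| ^ n * |u n / (n.factorial : ℝ)|
        ≤ ((n:ℝ)+2)^2 * (|y+1| ^ n * |u n / (n.factorial : ℝ)|) := by
      nth_rewrite 1 [show |y+1| ^ n * |u n / (n.factorial : ℝ)|
        = 1 * (|y+1| ^ n * |u n / (n.factorial : ℝ)|) from (one_mul _).symm]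
      apply mul_le_mul_of_nonneg_right _ (by positivity)
      nlinarith [Nat.cast_nonneg (α := ℝ) n]
    calc |y+1| ^ n * |u n / (n.factorial : ℝ)|
        ≤ ((n:ℝ)+2)^2 * (|y+1| ^ n * |u n / (n.factorial : ℝ)|) := h1
      _ = ((n:ℝ)+2)^2 * |u n / (n.factorial : ℝ)| * |y+1| ^ n := by ring
  refine ⟨part1, ?_, ?_⟩
  · -- W (-1) = 1
    rw [hW]
    have : ∀ k : ℕ, k ≠ 0 → ((-1:ℝ) + 1) ^ k * u k / (k.factorial : ℝ) = 0 := by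
      intro k hk
      rw [show ((-1:ℝ) + 1) = 0 by norm_num, zero_pow hk, zero_mul, zero_div]
    rw [tsum_eq_single 0 this]
    simp [hu0]
  · -- Part 3
    intro y₀ hy₀
    obtain ⟨hy₀1, hy₀2⟩ := hy₀
    have hx₀ : |y₀ + 1| < 2 := abs_lt.mpr ⟨by linarith, by linarith⟩
    set r : ℝ := (|y₀ + 1| + 2) / 2 with hrdef
    have hr1 : 1 ≤ r := by rw [hrdef]; have := abs_nonneg (y₀+1); linarith
    have hrx : |y₀ + 1| < r := by rw [hrdef]; linarith
    have hr2 : r < 2 := by rw [hrdef]; linarith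
    have hb := hsum r (by linarith) hr2
    set t : Set ℝ := Ioo (-1 - r) (-1 + r) with htdef
    have hy₀t : y₀ ∈ t := by
      obtain ⟨h1, h2⟩ := abs_lt.mp hrx
      exact ⟨by linarith, by linarith⟩
    have hmem : ∀ y ∈ t, |y + 1| ≤ r := by
      intro y hy
      obtain ⟨h1, h2⟩ := hy
      exact le_of_lt (abs_lt.mpr ⟨by linarith, by linarith⟩)
    have hWfun : W = fun z : ℝ => ∑' n : ℕ, (z + 1) ^ n * u n / (n.factorial : ℝ) :=
      funext hW
    have hgsum0 : Summable (fun n : ℕ => (y₀ + 1) ^ n * u n / (n.factorial : ℝ)) :=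
      part1 y₀ ⟨hy₀1, hy₀2⟩
    -- first derivative
    have hA : ∀ y ∈ t, HasDerivAt W
        (∑' n : ℕ, (n:ℝ) * (y+1)^(n-1) * (u n / (n.factorial : ℝ))) y := by
      intro y hyt
      rw [hWfun]
      exact hasDerivAt_tsum_of_isPreconnected hb isOpen_Ioo isPreconnected_Ioo
        (fun n z _ => g0_hasDerivAt u n z)
        (fun n z hz => by rw [Real.norm_eq_abs]; exact g1_bound u n hr1 (hmem z hz))
        hy₀t hgsum0 hyt
    have hq1 : Summable (fun n : ℕ => (n:ℝ) * (y₀+1)^(n-1) * (u n / (n.factorial : ℝ))) :=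
      Summable.of_norm_bounded hb
        (fun n => by rw [Real.norm_eq_abs]; exact g1_bound u n hr1 (hmem y₀ hy₀t))
    have hdiff1 : DifferentiableAt ℝ W y₀ := (hA y₀ hy₀t).differentiableAt
    have S1val : deriv W y₀
        = ∑' n : ℕ, (n:ℝ) * (y₀+1)^(n-1) * (u n / (n.factorial : ℝ)) :=
      (hA y₀ hy₀t).deriv
    -- second derivative
    have hB : ∀ y ∈ t, HasDerivAt
        (fun z : ℝ => ∑' n : ℕ, (n:ℝ) * (z+1)^(n-1) * (u n / (n.factorial : ℝ)))
        (∑' n : ℕ, (n:ℝ) * ((n:ℝ)-1) * (y+1)^(n-2) * (u n / (n.factorial : ℝ))) y := by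
      intro y hyt
      exact hasDerivAt_tsum_of_isPreconnected hb isOpen_Ioo isPreconnected_Ioo
        (fun n z _ => g1_hasDerivAt u n z)
        (fun n z hz => by rw [Real.norm_eq_abs]; exact g2_bound u n hr1 (hmem z hz))
        hy₀t hq1 hyt
    have hq2 : Summable (fun n : ℕ =>
        (n:ℝ) * ((n:ℝ)-1) * (y₀+1)^(n-2) * (u n / (n.factorial : ℝ))) :=
      Summable.of_norm_bounded hb
        (fun n => by rw [Real.norm_eq_abs]; exact g2_bound u n hr1 (hmem y₀ hy₀t))
    have hEq : deriv W =ᶠ[nhds y₀]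
        (fun z : ℝ => ∑' n : ℕ, (n:ℝ) * (z+1)^(n-1) * (u n / (n.factorial : ℝ))) :=
      Filter.eventuallyEq_of_mem (isOpen_Ioo.mem_nhds hy₀t) (fun y hy => (hA y hy).deriv)
    have hdiff2 : DifferentiableAt ℝ (deriv W) y₀ :=
      hEq.differentiableAt_iff.mpr (hB y₀ hy₀t).differentiableAt
    have S2val : deriv (deriv W) y₀
        = ∑' n : ℕ, (n:ℝ) * ((n:ℝ)-1) * (y₀+1)^(n-2) * (u n / (n.factorial : ℝ)) := by
      rw [hEq.deriv_eq]; exact (hB y₀ hy₀t).deriv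
    refine ⟨hdiff1, hdiff2, ?_⟩
    -- now the ODE identity via coefficient manipulation
    -- HasSum for W
    have hS0 : HasSum (fun n : ℕ => (cf0 u) n * (y₀+1) ^ n) (W y₀) := by
      have h := hgsum0.hasSum
      rw [← hW y₀] at h
      have hfe : (fun n : ℕ => (y₀ + 1) ^ n * u n / (n.factorial : ℝ))
          = fun n : ℕ => (cf0 u) n * (y₀+1) ^ n := by
        funext n; rw [cf0, mul_div_assoc, mul_comm]
      rwa [hfe] at h
    -- HasSum for deriv W
    have hS1 : HasSum (fun n : ℕ => (cf1 u) n * (y₀+1) ^ n) (deriv W y₀) := by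
      have h := hq1.hasSum
      rw [← S1val] at h
      have h' : HasSum (fun n : ℕ => (n:ℝ) * (y₀+1)^(n-1) * (u n / (n.factorial : ℝ)))
          (deriv W y₀ + ∑ i ∈ range 1,
            (i:ℝ) * (y₀+1)^(i-1) * (u i / (i.factorial : ℝ))) := by
        simpa using h
      have hs := (hasSum_nat_add_iff
        (f := fun n : ℕ => (n:ℝ) * (y₀+1)^(n-1) * (u n / (n.factorial : ℝ))) 1).mpr h'
      have hfe : (fun n : ℕ => ((n+1:ℕ):ℝ) * (y₀+1)^(n+1-1) * (u (n+1) / ((n+1).factorial : ℝ)))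
          = fun n : ℕ => (cf1 u) n * (y₀+1) ^ n := by
        funext n
        rw [cf1, Nat.add_sub_cancel]
        push_cast
        ring
      rwa [hfe] at hs
    -- HasSum for deriv (deriv W)
    have hS2 : HasSum (fun n : ℕ => (cf2 u) n * (y₀+1) ^ n) (deriv (deriv W) y₀) := by
      have h := hq2.hasSum
      rw [← S2val] at h
      have h' : HasSum (fun n : ℕ => (n:ℝ) * ((n:ℝ)-1) * (y₀+1)^(n-2) * (u n / (n.factorial : ℝ)))
          (deriv (deriv W) y₀ + ∑ i ∈ range 2,
            (i:ℝ) * ((i:ℝ)-1) * (y₀+1)^(i-2) * (u i / (i.factorial : ℝ))) := by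
        rw [Finset.sum_range_succ, Finset.sum_range_one]
        norm_num
        exact h
      have hs := (hasSum_nat_add_iff
        (f := fun n : ℕ => (n:ℝ) * ((n:ℝ)-1) * (y₀+1)^(n-2) * (u n / (n.factorial : ℝ))) 2).mpr h'
      have hfe : (fun n : ℕ =>
            ((n+2:ℕ):ℝ) * (((n+2:ℕ):ℝ)-1) * (y₀+1)^(n+2-2) * (u (n+2) / ((n+2).factorial : ℝ)))
          = fun n : ℕ => (cf2 u) n * (y₀+1) ^ n := by
        funext n
        rw [cf2, Nat.add_sub_cancel]
        push_cast
        ring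
      rwa [hfe] at hs
    -- shifted sums
    have hxS0 := sh6_hasSum hS0
    have hxxS0 := sh6_hasSum hxS0
    have hxS1 := sh6_hasSum hS1
    have hxS2 := sh6_hasSum hS2
    have hxxS2 := sh6_hasSum hxS2
    -- combined sum
    have H := ((((((hxS2.mul_left 2).sub hxxS2).sub (hxS1.mul_left 2)).add
        (hS1.mul_left 2)).sub (hxxS0.mul_left (c^2))).add
        (hxS0.mul_left (2*c^2))).sub (hS0.mul_left (c^2+l))
    have hfe : (fun n : ℕ =>
          2 * (sh6 (cf2 u) n * (y₀+1) ^ n) - sh6 (sh6 (cf2 u)) n * (y₀+1) ^ n - 2 * (sh6 (cf1 u) n * (y₀+1) ^ n)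
          + 2 * ((cf1 u) n * (y₀+1) ^ n) - c^2 * (sh6 (sh6 (cf0 u)) n * (y₀+1) ^ n)
          + 2*c^2 * (sh6 (cf0 u) n * (y₀+1) ^ n) - (c^2+l) * ((cf0 u) n * (y₀+1) ^ n))
        = fun n : ℕ =>
          (2 * sh6 (cf2 u) n - sh6 (sh6 (cf2 u)) n - 2 * sh6 (cf1 u) n + 2 * (cf1 u) n
            - c^2 * sh6 (sh6 (cf0 u)) n + 2*c^2 * sh6 (cf0 u) n - (c^2+l) * (cf0 u) n) * (y₀+1) ^ n := by
      funext n; ring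
    rw [hfe] at H
    -- each combined coefficient vanishes
    have hGzero : ∀ n : ℕ,
        2 * sh6 (cf2 u) n - sh6 (sh6 (cf2 u)) n - 2 * sh6 (cf1 u) n + 2 * (cf1 u) n
          - c^2 * sh6 (sh6 (cf0 u)) n + 2*c^2 * sh6 (cf0 u) n - (c^2+l) * (cf0 u) n = 0 := by
      intro n
      match n with
      | 0 =>
        simp only [sh6_zero, cf0, cf1]
        have h0 := hurec 0
        norm_num at h0 ⊢
        rw [h0]; ring
      | 1 =>
        have e1 : sh6 (cf2 u) 1 = cf2 u 0 := rfl
        have e2 : sh6 (sh6 (cf2 u)) 1 = 0 := rfl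
        have e3 : sh6 (cf1 u) 1 = cf1 u 0 := rfl
        have e4 : sh6 (sh6 (cf0 u)) 1 = 0 := rfl
        have e5 : sh6 (cf0 u) 1 = cf0 u 0 := rfl
        rw [e1, e2, e3, e4, e5]
        simp only [cf0, cf1, cf2]
        have h1 := hurec 1
        norm_num at h1 ⊢
        rw [h1]; ring
      | (m+2) =>
        simp only [show m+2 = (m+1)+1 from rfl, sh6_succ, cf0, cf1, cf2]
        have hr := harec m
        push_cast
        push_cast at hr
        linear_combination hr
    have hzero : HasSum (fun n : ℕ =>
        (2 * sh6 (cf2 u) n - sh6 (sh6 (cf2 u)) n - 2 * sh6 (cf1 u) n + 2 * (cf1 u) n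
          - c^2 * sh6 (sh6 (cf0 u)) n + 2*c^2 * sh6 (cf0 u) n - (c^2+l) * (cf0 u) n) * (y₀+1) ^ n) 0 := by
      have hfe2 : (fun n : ℕ =>
          (2 * sh6 (cf2 u) n - sh6 (sh6 (cf2 u)) n - 2 * sh6 (cf1 u) n + 2 * (cf1 u) n
            - c^2 * sh6 (sh6 (cf0 u)) n + 2*c^2 * sh6 (cf0 u) n - (c^2+l) * (cf0 u) n) * (y₀+1) ^ n)
          = fun _ : ℕ => (0:ℝ) := by
        funext n; rw [hGzero n, zero_mul]
      rw [hfe2]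
      exact hasSum_zero
    have hT0 := H.unique hzero
    linear_combination hT0
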